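/- (Theorem 3) Let n ≥ 1, let n₁ be an integer with 1 ≤ n₁ ≤ n, set n₂ = n − n₁ and β = n/n₁, and let σ₁, …, σₙ be positive reals and b₁, …, bₙ reals. Define G(ρ) = (Σᵢ₌₁ⁿ σᵢ²bᵢ²/(σᵢ²+ρ)²)·(Σⱼ₌₁^{n₁} (βσⱼ²+ρ)/(σⱼ²+ρ)²) + (n₂/ρ)·(Σᵢ₌₁ⁿ σᵢ²bᵢ²/(σᵢ²+ρ)²) − (Σᵢ₌₁ⁿ bᵢ²/(σᵢ²+ρ)²)·(Σⱼ₌₁^{n₁} σⱼ²(βσⱼ²+ρ)/(σⱼ²+ρ)²). Then ρ³·G(ρ) converges, as ρ → +∞, to n·(Σⱼ₌₁ⁿ σⱼ²bⱼ²) − (Σᵢ₌₁^{n₁} σᵢ²)·(Σⱼ₌₁ⁿ bⱼ²). -/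

import Mathlib

open Filter

/-- The COPRA characteristic function `G(ρ)`. -/
noncomputable def copraG (n n₁ : ℕ) (σ b : ℕ → ℝ) (ρ : ℝ) : ℝ :=
  (∑ i ∈ Finset.range n, σ i ^ 2 * b i ^ 2 / (σ i ^ 2 + ρ) ^ 2) *
      (∑ j ∈ Finset.range n₁,
        (((n : ℝ) / n₁) * σ j ^ 2 + ρ) / (σ j ^ 2 + ρ) ^ 2)
    + (((n - n₁ : ℕ) : ℝ) / ρ) *
        (∑ i ∈ Finset.range n, σ i ^ 2 * b i ^ 2 / (σ i ^ 2 + ρ) ^ 2)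
    - (∑ i ∈ Finset.range n, b i ^ 2 / (σ i ^ 2 + ρ) ^ 2) *
        (∑ j ∈ Finset.range n₁,
          σ j ^ 2 * (((n : ℝ) / n₁) * σ j ^ 2 + ρ) / (σ j ^ 2 + ρ) ^ 2)

private lemma auxA (c : ℝ) :
    Tendsto (fun ρ : ℝ => (c + ρ) / ρ) atTop (nhds 1) := by
  have h : Tendsto (fun ρ : ℝ => c * ρ⁻¹ + 1) atTop (nhds 1) := by
    have := (tendsto_inv_atTop_zero.const_mul c).add_const 1
    simpa using this
  refine h.congr' ?_
  filter_upwards [eventually_gt_atTop (0 : ℝ)] with ρ hρ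
  field_simp

private lemma auxB (c : ℝ) :
    Tendsto (fun ρ : ℝ => ρ / (c + ρ)) atTop (nhds 1) := by
  have h := (auxA c).inv₀ one_ne_zero
  simp only [inv_one] at h
  refine h.congr (fun ρ => ?_)
  rw [inv_div]

private lemma auxC (c : ℝ) :
    Tendsto (fun ρ : ℝ => ρ ^ 2 / (c + ρ) ^ 2) atTop (nhds 1) := by
  have h := (auxB c).pow 2
  simp only [one_pow] at h
  refine h.congr (fun ρ => ?_)
  rw [div_pow]

private lemma auxD (c d : ℝ) :
    Tendsto (fun ρ : ℝ => ρ * (d + ρ) / (c + ρ) ^ 2) atTop (nhds 1) := by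
  have h := (auxA d).mul (auxC c)
  simp only [one_mul] at h
  refine h.congr' ?_
  filter_upwards [eventually_gt_atTop (|c| : ℝ)] with ρ hρ
  have h1 : ρ ≠ 0 := by have := abs_nonneg c; linarith
  have h2 : c + ρ ≠ 0 := by nlinarith [neg_abs_le c]
  field_simp

/-- (Theorem 3) `ρ³·G(ρ)` converges, as `ρ → +∞`, to
`n·Σⱼ σⱼ²bⱼ² − (Σᵢ₌₁^{n₁} σᵢ²)·(Σⱼ bⱼ²)`. -/
theorem stmt_13 (n n₁ : ℕ) (hn : 1 ≤ n) (hn₁ : 1 ≤ n₁) (hn₁n : n₁ ≤ n)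
    (σ b : ℕ → ℝ) (hσ : ∀ i < n, 0 < σ i) :
    Filter.Tendsto (fun ρ : ℝ => ρ ^ 3 * copraG n n₁ σ b ρ) Filter.atTop
      (nhds ((n : ℝ) * (∑ j ∈ Finset.range n, σ j ^ 2 * b j ^ 2)
        - (∑ i ∈ Finset.range n₁, σ i ^ 2) * (∑ j ∈ Finset.range n, b j ^ 2))) := by
  set β : ℝ := (n : ℝ) / n₁ with hβ
  -- elementary limits for each sum, scaled
  have T1 : Tendsto (fun ρ : ℝ => ∑ i ∈ Finset.range n,
      ρ ^ 2 * (σ i ^ 2 * b i ^ 2 / (σ i ^ 2 + ρ) ^ 2)) atTop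
      (nhds (∑ i ∈ Finset.range n, σ i ^ 2 * b i ^ 2)) := by
    apply tendsto_finset_sum
    intro i _
    have h := (auxC (σ i ^ 2)).const_mul (σ i ^ 2 * b i ^ 2)
    simp only [mul_one] at h
    refine h.congr (fun ρ => ?_); ring
  have T2 : Tendsto (fun ρ : ℝ => ∑ j ∈ Finset.range n₁,
      ρ * ((β * σ j ^ 2 + ρ) / (σ j ^ 2 + ρ) ^ 2)) atTop (nhds (n₁ : ℝ)) := by
    have h := tendsto_finset_sum (Finset.range n₁)
      (fun j _ => auxD (σ j ^ 2) (β * σ j ^ 2))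
    simp only [Finset.sum_const, Finset.card_range, nsmul_eq_mul, mul_one] at h
    refine h.congr (fun ρ => Finset.sum_congr rfl fun j _ => ?_); ring
  have T3 : Tendsto (fun ρ : ℝ => ∑ i ∈ Finset.range n,
      ρ ^ 2 * (b i ^ 2 / (σ i ^ 2 + ρ) ^ 2)) atTop
      (nhds (∑ i ∈ Finset.range n, b i ^ 2)) := by
    apply tendsto_finset_sum
    intro i _
    have h := (auxC (σ i ^ 2)).const_mul (b i ^ 2)
    simp only [mul_one] at h
    refine h.congr (fun ρ => ?_); ring
  have T4 : Tendsto (fun ρ : ℝ => ∑ j ∈ Finset.range n₁,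
      ρ * (σ j ^ 2 * (β * σ j ^ 2 + ρ) / (σ j ^ 2 + ρ) ^ 2)) atTop
      (nhds (∑ j ∈ Finset.range n₁, σ j ^ 2)) := by
    apply tendsto_finset_sum
    intro j _
    have h := (auxD (σ j ^ 2) (β * σ j ^ 2)).const_mul (σ j ^ 2)
    simp only [mul_one] at h
    refine h.congr (fun ρ => ?_); ring
  have key := ((T1.mul T2).add (T1.const_mul (((n - n₁ : ℕ) : ℝ)))).sub (T3.mul T4)
  have hcast : ((n - n₁ : ℕ) : ℝ) = (n : ℝ) - n₁ := by
    exact Nat.cast_sub hn₁n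
  have hval : (∑ i ∈ Finset.range n, σ i ^ 2 * b i ^ 2) * (n₁ : ℝ)
      + ((n - n₁ : ℕ) : ℝ) * (∑ i ∈ Finset.range n, σ i ^ 2 * b i ^ 2)
      - (∑ i ∈ Finset.range n, b i ^ 2) * (∑ j ∈ Finset.range n₁, σ j ^ 2)
      = (n : ℝ) * (∑ j ∈ Finset.range n, σ j ^ 2 * b j ^ 2)
        - (∑ i ∈ Finset.range n₁, σ i ^ 2) * (∑ j ∈ Finset.range n, b j ^ 2) := by
    rw [hcast]; ring
  rw [hval] at key
  refine key.congr' ?_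
  filter_upwards [eventually_gt_atTop (0 : ℝ)] with ρ hρ
  simp only [copraG, ← hβ, ← Finset.mul_sum]
  field_simp
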